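/- Let ξ = (1 − cos δ) cos τ₁ − sin δ sin τ₁ and η = (1 − cos δ) sin τ₁ + sin δ cos τ₁ for some δ ∈ [0, 2π), and set ρ² = ξ² + η² = 2 − 2 cos δ, assumed positive. Let μ = 1 if δ ∈ [0, π] and μ = −1 if δ ∈ (π, 2π). Then cos τ₁ = μ·(η/ρ²)·sqrt(1 − (1 − ρ²/2)²) + ξ/2 and sin τ₁ = −μ·(ξ/ρ²)·sqrt(1 − (1 − ρ²/2)²) + η/2. -/

import Mathlib

theorem CCC_inversion (δ τ₁ ξ η μ : ℝ)
    (hδ : δ ∈ Set.Ico 0 (2 * Real.pi))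
    (hξ : ξ = (1 - Real.cos δ) * Real.cos τ₁ - Real.sin δ * Real.sin τ₁)
    (hη : η = (1 - Real.cos δ) * Real.sin τ₁ + Real.sin δ * Real.cos τ₁)
    (hμ : μ = if δ ≤ Real.pi then 1 else -1)
    (hρ : 0 < 2 - 2 * Real.cos δ) :
    ξ ^ 2 + η ^ 2 = 2 - 2 * Real.cos δ ∧
    Real.cos τ₁ = μ * (η / (ξ ^ 2 + η ^ 2))
        * Real.sqrt (1 - (1 - (ξ ^ 2 + η ^ 2) / 2) ^ 2) + ξ / 2 ∧
    Real.sin τ₁ = -(μ * (ξ / (ξ ^ 2 + η ^ 2))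
        * Real.sqrt (1 - (1 - (ξ ^ 2 + η ^ 2) / 2) ^ 2)) + η / 2 := by
  have pyth : Real.sin δ ^ 2 + Real.cos δ ^ 2 = 1 := Real.sin_sq_add_cos_sq δ
  have pyth1 : Real.sin τ₁ ^ 2 + Real.cos τ₁ ^ 2 = 1 := Real.sin_sq_add_cos_sq τ₁
  have hsum : ξ ^ 2 + η ^ 2 = 2 - 2 * Real.cos δ := by
    rw [hξ, hη]; nlinarith [pyth, pyth1]
  have h1 : 1 - (1 - (2 - 2 * Real.cos δ) / 2) ^ 2 = Real.sin δ ^ 2 := by nlinarith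
  have hms : μ * Real.sqrt (Real.sin δ ^ 2) = Real.sin δ := by
    rw [Real.sqrt_sq_eq_abs, hμ]
    rcases le_or_gt δ Real.pi with h | h
    · rw [if_pos h, abs_of_nonneg (Real.sin_nonneg_of_nonneg_of_le_pi hδ.1 h)]; ring
    · rw [if_neg (not_le.mpr h), abs_of_nonpos ?_]
      · ring
      · have := Real.sin_nonneg_of_nonneg_of_le_pi (x := δ - Real.pi)
          (by linarith) (by linarith [hδ.2])
        rw [Real.sin_sub_pi] at this; linarith
  have hne : (2 - 2 * Real.cos δ) ≠ 0 := ne_of_gt hρ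
  have key : ∀ a : ℝ, μ * (a / (2 - 2 * Real.cos δ)) * Real.sqrt (Real.sin δ ^ 2)
      = Real.sin δ * a / (2 - 2 * Real.cos δ) := by
    intro a
    calc μ * (a / (2 - 2 * Real.cos δ)) * Real.sqrt (Real.sin δ ^ 2)
        = (μ * Real.sqrt (Real.sin δ ^ 2)) * a / (2 - 2 * Real.cos δ) := by ring
      _ = Real.sin δ * a / (2 - 2 * Real.cos δ) := by rw [hms]
  refine ⟨hsum, ?_, ?_⟩
  · rw [hsum, h1, key]
    rw [hξ, hη]
    field_simp [show (1 - Real.cos δ) ≠ 0 from fun h => hne (by linarith)]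
    ring_nf
    linear_combination (-Real.cos τ₁) * pyth
  · rw [hsum, h1, key]
    rw [hξ, hη]
    field_simp [show (1 - Real.cos δ) ≠ 0 from fun h => hne (by linarith)]
    ring_nf
    linear_combination (-Real.sin τ₁) * pyth
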